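/- Let A be an associative ring with 1 that is finitely generated as a module over a Noetherian commutative ring R. For any s ∈ R there exists a positive integer k such that the localization map GL(n, A, s^k A) → GL(n, A_s) is injective; equivalently, s^k A injects into A_s. -/

import Mathlib

/-- If `A` is module finite over a commutative Noetherian ring `R` and `s ∈ R`, then for
some `k > 0` the localization map `GL(n, A, s^k A) → GL(n, A_s)` (induced entrywise by
the canonical map `A → A_s`) is injective. -/
theorem localization_injective_on_congrSubgroup {R : Type*} [CommRing R]
    [IsNoetherianRing R] (A : Type*) [Ring A] [Algebra R A] [Module.Finite R A]
    (N : ℕ) (s : R) :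
    ∃ k : ℕ, 0 < k ∧
      ∀ g h : (Matrix (Fin N) (Fin N) A)ˣ,
        (∀ i j, ∃ a : A, (g.val - 1) i j = s ^ k • a) →
        (∀ i j, ∃ a : A, (h.val - 1) i j = s ^ k • a) →
        g.val.map (LocalizedModule.mkLinearMap (Submonoid.powers s) A) =
          h.val.map (LocalizedModule.mkLinearMap (Submonoid.powers s) A) →
        g = h := by
  haveI : IsNoetherian R A := inferInstance
  -- chain of kernels of multiplication by s^n
  set f : ℕ →o Submodule R A :=
    ⟨fun n => LinearMap.ker ((s ^ n) • (LinearMap.id : A →ₗ[R] A)), by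
      intro n m hnm
      intro a ha
      simp only [LinearMap.mem_ker, LinearMap.smul_apply, LinearMap.id_apply] at ha ⊢
      have : s ^ m = s ^ (m - n) * s ^ n := by
        rw [← pow_add]; congr 1; omega
      rw [this, mul_smul, ha, smul_zero]⟩ with hf
  obtain ⟨n, hn⟩ := monotone_stabilizes_iff_noetherian.mpr inferInstance f
  refine ⟨n + 1, Nat.succ_pos n, ?_⟩
  intro g h hg hh heq
  have key : ∀ a : A, (∃ m : ℕ, s ^ m • (s ^ (n+1) • a) = 0) → s ^ (n+1) • a = 0 := by
    rintro a ⟨m, hm⟩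
    have ha : a ∈ f (m + (n+1)) := by
      simp only [hf, OrderHom.coe_mk, LinearMap.mem_ker, LinearMap.smul_apply,
        LinearMap.id_apply]
      change s ^ (m + (n+1)) • a = 0
      rw [pow_add, mul_smul]
      exact hm
    have := hn (m + (n+1)) (by omega)
    rw [← this] at ha
    have ha' : a ∈ f (n+1) := (hn (n+1) (by omega)) ▸ ha
    exact ha'
  ext i j
  obtain ⟨a, ha⟩ := hg i j
  obtain ⟨b, hb⟩ := hh i j
  have hmap : LocalizedModule.mkLinearMap (Submonoid.powers s) A (g.val i j) =
      LocalizedModule.mkLinearMap (Submonoid.powers s) A (h.val i j) := by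
    have := congrFun (congrFun heq i) j
    simpa [Matrix.map_apply] using this
  -- from equality of localizations, get a power of s killing the difference
  have hmk : LocalizedModule.mk (g.val i j) (1 : Submonoid.powers s) =
      LocalizedModule.mk (h.val i j) (1 : Submonoid.powers s) := hmap
  rw [LocalizedModule.mk_eq] at hmk
  obtain ⟨u, hu⟩ := hmk
  obtain ⟨m, hm⟩ := u.2
  simp only [one_smul] at hu
  have hdiff : s ^ m • (g.val i j - h.val i j) = 0 := by
    rw [smul_sub, sub_eq_zero]
    have hm' : s ^ m = (u : R) := hm
    have : (u : R) • g.val i j = (u : R) • h.val i j := hu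
    rw [← hm'] at this; exact this
  have hsub : g.val i j - h.val i j = s ^ (n+1) • (a - b) := by
    have h1 := ha; have h2 := hb
    rw [Matrix.sub_apply] at h1 h2
    rw [smul_sub, ← h1, ← h2]; abel
  have : s ^ (n+1) • (a - b) = 0 := key (a - b) ⟨m, by rw [← hsub]; exact hdiff⟩
  exact sub_eq_zero.mp (hsub.trans this)
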